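/- The multiplicity e_i(A) of p^i as a p-adic elementary divisor of A is zero whenever t < i < 2t, whenever 3t < i < 4t, and whenever i > 4t. -/

import Mathlib

set_option linter.unusedSectionVars false

open Matrix Module Submodule

/-- The set of `k`-dimensional subspaces of `V`. -/
abbrev LGr (F V : Type*) [Field F] [AddCommGroup V] [Module F V] (k : ℕ) :=
  {W : Submodule F V // Module.finrank F W = k}


variable {p : ℕ} [Fact p.Prime]

lemma PadicInt.not_isUnit_p : ¬ IsUnit (p : ℤ_[p]) := by
  rw [PadicInt.isUnit_iff, PadicInt.norm_p]
  have hp : (1:ℝ) < (p:ℝ) := by exact_mod_cast (Fact.out : p.Prime).one_lt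
  intro h
  have : (p:ℝ)⁻¹ < 1 := by rw [inv_lt_one_iff₀]; right; exact hp
  linarith [h]

lemma PadicInt.isUnit_of_not_dvd {x : ℤ_[p]} (h : ¬ (p:ℤ_[p]) ∣ x) : IsUnit x := by
  rw [PadicInt.isUnit_iff]
  rcases lt_or_eq_of_le (PadicInt.norm_le_one x) with h1 | h1
  · exact absurd ((PadicInt.norm_lt_one_iff_dvd x).1 h1) h
  · exact h1

lemma PadicInt.p_pow_ne_zero (k : ℕ) : ((p:ℤ_[p])^k) ≠ 0 := by
  apply pow_ne_zero
  exact_mod_cast (Nat.cast_ne_zero (R := ℤ_[p])).2 (Fact.out : p.Prime).ne_zero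

lemma pow_succ_not_dvd_pow_mul_unit {u : ℤ_[p]} (hu : IsUnit u) (k : ℕ)
    (h : (p:ℤ_[p])^(k+1) ∣ (p:ℤ_[p])^k * u) : False := by
  rw [pow_succ] at h
  have : (p:ℤ_[p]) ∣ u := (mul_dvd_mul_iff_left (PadicInt.p_pow_ne_zero k)).1 h
  exact PadicInt.not_isUnit_p (isUnit_of_dvd_unit this hu)

/-- The diagonal-entry valuation-gap lemma. -/
lemma gap_lemma {n : Type*} [Fintype n] [DecidableEq n]
    (X P Q : Matrix n n ℤ_[p]) (d : n → ℤ_[p]) (hP : IsUnit P.det) (hQ : IsUnit Q.det)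
    (h : P * X * Q = diagonal d)
    (α β γ : ℤ_[p]) (hcubic : X*X*X + α • (X*X) + β • X + γ • 1 = 0)
    (m i : ℕ) (hβ : ∃ u, IsUnit u ∧ β = (p:ℤ_[p])^m * u)
    (hγ : (p:ℤ_[p])^(m+i+1) ∣ γ)
    (hmi : m < i) (j : n) (hdj : Associated ((p:ℤ_[p])^i) (d j)) : False := by
  letI := P.invertibleOfIsUnitDet hP
  letI := Q.invertibleOfIsUnitDet hQ
  set D := diagonal d with hD
  set W : Matrix n n ℤ_[p] := ⅟Q * ⅟P with hW
  have hX : X = ⅟P * D * ⅟Q := by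
    rw [← h]
    simp only [mul_assoc, invOf_mul_cancel_left]
    rw [mul_invOf_self, mul_one]
  have hX2 : P * (X * X) * Q = D * W * D := by
    rw [hX, hW]
    simp only [mul_assoc, mul_invOf_cancel_left, invOf_mul_cancel_left, invOf_mul_self,
      mul_invOf_self, mul_one, one_mul]
  have hX3 : P * (X * X * X) * Q = D * (W * D * W) * D := by
    rw [hX, hW]
    simp only [mul_assoc, mul_invOf_cancel_left, invOf_mul_cancel_left, invOf_mul_self,
      mul_invOf_self, mul_one, one_mul]
  have key : D * (W * D * W) * D + α • (D * W * D) + β • D + γ • (P * Q) = 0 := by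
    have h0 := congrArg (fun M => P * M * Q) hcubic
    simp only [Matrix.mul_add, Matrix.add_mul, Matrix.mul_smul, Matrix.smul_mul,
      Matrix.mul_one, Matrix.mul_zero, Matrix.zero_mul] at h0
    rw [hX3, hX2, h] at h0
    exact h0
  have keyj := congrArg (fun M => M j j) key
  simp only [Matrix.add_apply, Matrix.smul_apply, Matrix.zero_apply, smul_eq_mul] at keyj
  rw [Matrix.mul_diagonal, Matrix.diagonal_mul, Matrix.mul_diagonal, Matrix.diagonal_mul] at keyj
  rw [show D j j = d j from Matrix.diagonal_apply_eq d j] at keyj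
  -- keyj : d j * (W*D*W) j j * d j + α * (d j * W j j * d j) + β * d j + γ * (P*Q) j j = 0
  obtain ⟨u, hu, hβu⟩ := hβ
  obtain ⟨v, hv⟩ := hdj
  -- d j = p^i * v
  have hdjv : d j = (p:ℤ_[p])^i * v := hv.symm
  have hdvd : ((p:ℤ_[p])^(m+i+1)) ∣ β * d j := by
    have h1 : ((p:ℤ_[p])^(m+i+1)) ∣ d j * (W*D*W) j j * d j := by
      rw [hdjv]
      have : (m+i+1) ≤ i + i := by omega
      calc ((p:ℤ_[p])^(m+i+1)) ∣ (p:ℤ_[p])^(i+i) := pow_dvd_pow _ this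
        _ ∣ _ := ⟨v * (W*D*W) j j * v, by ring⟩
    have h2 : ((p:ℤ_[p])^(m+i+1)) ∣ α * (d j * W j j * d j) := by
      rw [hdjv]
      have : (m+i+1) ≤ i + i := by omega
      calc ((p:ℤ_[p])^(m+i+1)) ∣ (p:ℤ_[p])^(i+i) := pow_dvd_pow _ this
        _ ∣ _ := ⟨α * (v * W j j * v), by ring⟩
    have h3 : ((p:ℤ_[p])^(m+i+1)) ∣ γ * (P*Q) j j := hγ.mul_right _
    have : β * d j = -(d j * (W*D*W) j j * d j) - α * (d j * W j j * d j) - γ * (P*Q) j j := by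
      linear_combination keyj
    rw [this]
    exact dvd_sub (dvd_sub (dvd_neg.mpr h1) h2) h3
  have : ((p:ℤ_[p])^(m+i+1)) ∣ (p:ℤ_[p])^(m+i) * (u * v) := by
    have : β * d j = (p:ℤ_[p])^(m+i) * (u * v) := by
      rw [hβu, hdjv, pow_add]; ring
    rwa [this] at hdvd
  exact pow_succ_not_dvd_pow_mul_unit (hu.mul v.isUnit) (m+i) this



section Counting
variable {F : Type*} [Field F] {V : Type*} [AddCommGroup V] [Module F V]

lemma isCompl_of_skew [FiniteDimensional F V] (hV : finrank F V = 4)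
    {U X : Submodule F V} (hU : finrank F U = 2) (hX : finrank F X = 2)
    (h : X ⊓ U = ⊥) : IsCompl U X := by
  have hinf : U ⊓ X = ⊥ := by rw [inf_comm]; exact h
  constructor
  · rw [disjoint_iff]; exact hinf
  · rw [codisjoint_iff]
    apply Submodule.eq_top_of_finrank_eq
    have := Submodule.finrank_sup_add_finrank_inf_eq U X
    rw [hinf, finrank_bot, hU, hX] at this
    rw [hV]
    omega

variable (U W₀ : Submodule F V) (hc : IsCompl U W₀)

/-- The projection onto `U` with kernel the graph of `-g`. -/
noncomputable def projMap (g : W₀ →ₗ[F] U) : V →ₗ[F] ↥U :=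
  g ∘ₗ (W₀.projectionOnto U hc.symm) + U.projectionOnto W₀ hc

lemma projMap_apply_U (g : W₀ →ₗ[F] U) (u : ↥U) : projMap U W₀ hc g u = u := by
  simp [projMap, Submodule.projectionOnto_apply_left,
    Submodule.projectionOnto_apply_right]

lemma projMap_apply_W₀ (g : W₀ →ₗ[F] U) (w : ↥W₀) : projMap U W₀ hc g w = g w := by
  simp [projMap, Submodule.projectionOnto_apply_left,
    Submodule.projectionOnto_apply_right]

lemma projMap_surj (g : W₀ →ₗ[F] U) : Function.Surjective (projMap U W₀ hc g) :=
  fun u => ⟨u, projMap_apply_U U W₀ hc g u⟩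

variable [FiniteDimensional F V]

lemma finrank_ker_projMap (hV : finrank F V = 4) (hU : finrank F U = 2) (g : W₀ →ₗ[F] U) :
    finrank F (LinearMap.ker (projMap U W₀ hc g)) = 2 := by
  have h1 := LinearMap.finrank_range_add_finrank_ker (projMap U W₀ hc g)
  rw [LinearMap.range_eq_top.2 (projMap_surj U W₀ hc g), finrank_top, hV, hU] at h1
  omega

lemma ker_projMap_inf (g : W₀ →ₗ[F] U) :
    LinearMap.ker (projMap U W₀ hc g) ⊓ U = ⊥ := by
  rw [eq_bot_iff]
  rintro x ⟨hk, hxU⟩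
  have : projMap U W₀ hc g x = ⟨x, hxU⟩ := projMap_apply_U U W₀ hc g ⟨x, hxU⟩
  rw [LinearMap.mem_ker.1 hk] at this
  simpa using congrArg Subtype.val this.symm

/-- The master bijection: 2-dim subspaces skew to `U` correspond to maps `W₀ → U`. -/
noncomputable def lineEquiv (hV : finrank F V = 4) (hU : finrank F U = 2) : (W₀ →ₗ[F] U) ≃ {X : LGr F V 2 // X.1 ⊓ U = ⊥} :=
  Equiv.ofBijective
    (fun g => ⟨⟨LinearMap.ker (projMap U W₀ hc g), finrank_ker_projMap U W₀ hc hV hU g⟩,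
      ker_projMap_inf U W₀ hc g⟩)
    (by
      constructor
      · intro g g' hgg'
        have hker : LinearMap.ker (projMap U W₀ hc g) = LinearMap.ker (projMap U W₀ hc g') := by
          simpa using congrArg (fun X => X.1.1) hgg'
        ext w₀
        have hmem : (w₀ : V) - (g w₀ : V) ∈ LinearMap.ker (projMap U W₀ hc g) := by
          rw [LinearMap.mem_ker, map_sub]
          rw [projMap_apply_W₀ U W₀ hc g w₀, projMap_apply_U U W₀ hc g (g w₀)]
          exact sub_self _
        rw [hker, LinearMap.mem_ker, map_sub, projMap_apply_W₀ U W₀ hc g' w₀,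
          projMap_apply_U U W₀ hc g' (g w₀), sub_eq_zero] at hmem
        exact congrArg Subtype.val hmem.symm
      · rintro ⟨⟨X, hX2⟩, hXU⟩
        have hcX : IsCompl U X := isCompl_of_skew hV hU hX2 hXU
        -- the projection of X to W₀ along U is bijective
        set π₀ := W₀.projectionOnto U hc.symm with hπ₀
        set e : ↥X →ₗ[F] ↥W₀ := π₀ ∘ₗ X.subtype with he
        have hinj : Function.Injective e := by
          rw [← LinearMap.ker_eq_bot, eq_bot_iff]
          intro x hx
          rw [LinearMap.mem_ker] at hx
          have hdec := Submodule.projection_add_projection_eq_self hc (x : V)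
          rw [← Submodule.coe_projectionOnto_apply, ← Submodule.coe_projectionOnto_apply] at hdec
          rw [show (π₀ ((x : V))) = 0 from hx] at hdec
          -- hdec : (proj_U x : V) + 0 = x
          have hxU : (x : V) ∈ U := by
            rw [← hdec]
            simp
          have : (x : V) ∈ X ⊓ U := ⟨x.2, hxU⟩
          rw [hXU] at this
          simpa using this
        have hW₀2 : finrank F W₀ = 2 := by
          have := finrank_add_eq_of_isCompl hc
          rw [hU, hV] at this; omega
        have hbij : Function.Bijective e :=
          ⟨hinj, (LinearMap.injective_iff_surjective_of_finrank_eq_finrank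
            (by rw [hX2, hW₀2])).1 hinj⟩
        set ee := LinearEquiv.ofBijective e hbij with hee
        refine ⟨-(((U.projectionOnto W₀ hc) ∘ₗ X.subtype) ∘ₗ (ee.symm : ↥W₀ →ₗ[F] ↥X)), ?_⟩
        apply Subtype.ext; apply Subtype.ext
        show LinearMap.ker (projMap U W₀ hc _) = X
        symm
        apply Submodule.eq_of_le_of_finrank_eq
        · intro x hxX
          rw [LinearMap.mem_ker]
          set g := -(((U.projectionOnto W₀ hc) ∘ₗ X.subtype) ∘ₗ (ee.symm : ↥W₀ →ₗ[F] ↥X))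
          show g (π₀ x) + U.projectionOnto W₀ hc x = 0
          have h1 : π₀ x = e ⟨x, hxX⟩ := rfl
          have h2 : ee.symm (e ⟨x, hxX⟩) = ⟨x, hxX⟩ := by
            have : e ⟨x, hxX⟩ = ee ⟨x, hxX⟩ := rfl
            rw [this, LinearEquiv.symm_apply_apply]
          simp only [g, h1, LinearMap.neg_apply, LinearMap.comp_apply, LinearEquiv.coe_coe]
          rw [h2]
          simp
        · rw [hX2, finrank_ker_projMap U W₀ hc hV hU])

lemma lineEquiv_apply (hV : finrank F V = 4) (hU : finrank F U = 2) (g : W₀ →ₗ[F] U) :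
    ((lineEquiv U W₀ hc hV hU g : {X : LGr F V 2 // X.1 ⊓ U = ⊥})).1.1
      = LinearMap.ker (projMap U W₀ hc g) := rfl

end Counting


section Cards
variable {F : Type*} [Field F] [Fintype F]

lemma finite_of_findim (M : Type*) [AddCommGroup M] [Module F M] [FiniteDimensional F M] :
    Finite M :=
  Finite.of_equiv _ (finBasis F M).equivFun.toEquiv.symm

lemma natCard_module (M : Type*) [AddCommGroup M] [Module F M] [FiniteDimensional F M] :
    Nat.card M = Fintype.card F ^ finrank F M := by
  have : Finite M := finite_of_findim (F := F) M
  have : Fintype M := Fintype.ofFinite M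
  rw [Nat.card_eq_fintype_card, card_eq_pow_finrank (K := F)]

lemma natCard_hom (M N : Type*) [AddCommGroup M] [Module F M] [FiniteDimensional F M]
    [AddCommGroup N] [Module F N] [FiniteDimensional F N]
    (hM : finrank F M = 2) (hN : finrank F N = 2) :
    Nat.card (M →ₗ[F] N) = Fintype.card F ^ 4 := by
  have hFin : Finite N := finite_of_findim (F := F) N
  have := Nat.card_congr ((finBasis F M).constr F (M' := N)).toEquiv
  rw [← this, Nat.card_fun, Nat.card_eq_fintype_card (α := Fin (finrank F M)), Fintype.card_fin,
    hM, natCard_module (F := F) N, hN]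
  ring

/-- A basis of a 2-dim module indexed by `Fin 2`. -/
noncomputable def bas2 (M : Type*) [AddCommGroup M] [Module F M] [FiniteDimensional F M]
    (hM : finrank F M = 2) : Basis (Fin 2) F M :=
  (finBasis F M).reindex (finCongr hM)

lemma constr_symm_apply {M N : Type*} [AddCommGroup M] [Module F M]
    [AddCommGroup N] [Module F N] (b : Basis (Fin 2) F M) (g : M →ₗ[F] N) (i : Fin 2) :
    (b.constr F).symm g i = g (b i) := by
  have h : (b.constr F) (fun i => g (b i)) = g := by
    apply b.ext
    intro j
    rw [Basis.constr_basis]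
  conv_lhs => rw [← h]
  rw [LinearEquiv.symm_apply_apply]

lemma inj_iff_pair {M N : Type*} [AddCommGroup M] [Module F M]
    [AddCommGroup N] [Module F N] (b : Basis (Fin 2) F M) (g : M →ₗ[F] N) :
    Function.Injective g ↔ g (b 0) ≠ 0 ∧ g (b 1) ∉ span F {g (b 0)} := by
  constructor
  · intro hg
    constructor
    · intro h0
      have : b 0 = 0 := hg (by simpa using h0)
      exact b.ne_zero 0 this
    · intro hmem
      obtain ⟨c, hc⟩ := mem_span_singleton.1 hmem
      have : c • b 0 = b 1 := hg (by simpa using hc)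
      have h1 := congrArg (fun x => b.repr x 1) this
      simp only [_root_.map_smul, Basis.repr_self, Finsupp.smul_apply, smul_eq_mul] at h1
      rw [Finsupp.single_eq_of_ne (by decide), Finsupp.single_eq_same] at h1
      simp at h1
  · rintro ⟨h0, h1⟩
    rw [← LinearMap.ker_eq_bot, eq_bot_iff]
    intro x hx
    rw [LinearMap.mem_ker] at hx
    have hxr : b.repr x 0 • b 0 + b.repr x 1 • b 1 = x := by
      have := b.sum_repr x
      rwa [Fin.sum_univ_two] at this
    set a := b.repr x 0
    set c := b.repr x 1
    have hgx : a • g (b 0) + c • g (b 1) = 0 := by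
      have h' : g (a • b 0 + c • b 1) = 0 := by rw [hxr]; exact hx
      simpa [map_add, _root_.map_smul] using h'
    by_cases hc : c = 0
    · rw [hc, zero_smul, add_zero] at hgx
      rcases smul_eq_zero.1 hgx with ha | hb
      · rw [← hxr, hc, ha, zero_smul, zero_smul, add_zero]
        simp
      · exact absurd hb h0
    · exfalso
      apply h1
      rw [mem_span_singleton]
      refine ⟨-(c⁻¹ * a), ?_⟩
      have h3 : c • g (b 1) = -(a • g (b 0)) := eq_neg_of_add_eq_zero_right hgx
      have : g (b 1) = (-(c⁻¹ * a)) • g (b 0) := by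
        calc g (b 1) = c⁻¹ • (c • g (b 1)) := by rw [smul_smul, inv_mul_cancel₀ hc, one_smul]
          _ = c⁻¹ • -(a • g (b 0)) := by rw [h3]
          _ = (-(c⁻¹ * a)) • g (b 0) := by rw [smul_neg, smul_smul, neg_smul]
      exact this.symm
  
lemma card_pairs (N : Type*) [AddCommGroup N] [Module F N] [FiniteDimensional F N]
    (hN : finrank F N = 2) :
    Nat.card {x : N × N // x.1 ≠ 0 ∧ x.2 ∉ span F {x.1}}
      = (Fintype.card F ^ 2 - 1) * (Fintype.card F ^ 2 - Fintype.card F) := by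
  classical
  have : Finite N := finite_of_findim (F := F) N
  have : Fintype N := Fintype.ofFinite N
  set q := Fintype.card F
  have hcardN : Fintype.card N = q ^ 2 := by
    rw [← Nat.card_eq_fintype_card, natCard_module (F := F) N, hN]
  -- reorganize as a sigma type
  have e : {x : N × N // x.1 ≠ 0 ∧ x.2 ∉ span F {x.1}}
      ≃ Σ a : {a : N // a ≠ 0}, {b : N // b ∉ span F {(a : N)}} :=
    { toFun := fun x => ⟨⟨x.1.1, x.2.1⟩, ⟨x.1.2, x.2.2⟩⟩
      invFun := fun s => ⟨⟨s.1.1, s.2.1⟩, ⟨s.1.2, s.2.2⟩⟩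
      left_inv := fun x => rfl
      right_inv := fun s => rfl }
  rw [Nat.card_congr e, Nat.card_eq_fintype_card, Fintype.card_sigma]
  have hfiber : ∀ a : {a : N // a ≠ 0},
      Fintype.card {b : N // b ∉ span F {(a : N)}} = q ^ 2 - q := by
    rintro ⟨a, ha⟩
    rw [Fintype.card_subtype_compl, hcardN]
    congr 1
    have : Fintype.card {b : N // b ∈ span F {a}} = Fintype.card ↥(span F {a}) := rfl
    rw [this, ← Nat.card_eq_fintype_card, natCard_module (F := F) ↥(span F {a}),
      finrank_span_singleton ha, pow_one]
  rw [Finset.sum_congr rfl (fun a _ => hfiber a), Finset.sum_const, smul_eq_mul]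
  congr 1
  rw [Finset.card_univ]
  have h2 : Fintype.card {a : N // ¬ (a = 0)} = Fintype.card N - 1 := by
    rw [Fintype.card_subtype_compl, Fintype.card_subtype_eq (0:N)]
  rw [show Fintype.card {a : N // a ≠ 0} = Fintype.card {a : N // ¬ (a = 0)} from rfl, h2, hcardN]

lemma card_shift_span (N : Type*) [AddCommGroup N] [Module F N] [FiniteDimensional F N]
    (hN : finrank F N = 2) (s u₁ : N) (hu : u₁ ≠ 0) :
    Nat.card {x : N // x + s ∉ span F {u₁}}
      = Fintype.card F ^ 2 - Fintype.card F := by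
  classical
  have : Finite N := finite_of_findim (F := F) N
  have : Fintype N := Fintype.ofFinite N
  have hcardN : Fintype.card N = Fintype.card F ^ 2 := by
    rw [← Nat.card_eq_fintype_card, natCard_module (F := F) N, hN]
  rw [Nat.card_eq_fintype_card, Fintype.card_subtype_compl, hcardN]
  congr 1
  have e : {x : N // x + s ∈ span F {u₁}} ≃ ↥(span F {u₁}) :=
    { toFun := fun x => ⟨x.1 + s, x.2⟩
      invFun := fun y => ⟨y.1 - s, by rw [sub_add_cancel]; exact y.2⟩
      left_inv := fun x => by ext; simp
      right_inv := fun y => by ext; simp }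
  rw [← Nat.card_eq_fintype_card, Nat.card_congr e, natCard_module (F := F) ↥(span F {u₁}),
    finrank_span_singleton hu, pow_one]

lemma count_inj (M N : Type*) [AddCommGroup M] [Module F M] [FiniteDimensional F M]
    [AddCommGroup N] [Module F N] [FiniteDimensional F N]
    (hM : finrank F M = 2) (hN : finrank F N = 2) :
    Nat.card {g : M →ₗ[F] N // Function.Injective g}
      = (Fintype.card F ^ 2 - 1) * (Fintype.card F ^ 2 - Fintype.card F) := by
  set b := bas2 M hM with hb
  set E : (M →ₗ[F] N) ≃ (N × N) :=
    (b.constr F).toEquiv.symm.trans (piFinTwoEquiv (fun _ => N)) with hE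
  have hEapp : ∀ g : M →ₗ[F] N, E g = (g (b 0), g (b 1)) := by
    intro g
    show (piFinTwoEquiv (fun _ => N)) ((b.constr F).toEquiv.symm g) = _
    have h0 : ((b.constr F).toEquiv.symm g) = fun i => g (b i) := by
      funext i
      exact constr_symm_apply b g i
    rw [h0]
    rfl
  have e := Equiv.subtypeEquiv E
    (p := fun g : M →ₗ[F] N => Function.Injective g)
    (q := fun x : N × N => x.1 ≠ 0 ∧ x.2 ∉ span F {x.1})
    (fun g => by rw [hEapp g]; exact inj_iff_pair b g)
  rw [Nat.card_congr e, card_pairs N hN]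


end Cards
section Counts
variable {F : Type*} [Field F] [Fintype F] {V : Type*} [AddCommGroup V] [Module F V]
  [FiniteDimensional F V]

lemma count_single (hV : finrank F V = 4) (U : Submodule F V) (hU : finrank F U = 2) :
    Nat.card {X : LGr F V 2 // X.1 ⊓ U = ⊥} = Fintype.card F ^ 4 := by
  obtain ⟨W₀, hc⟩ := U.exists_isCompl
  have hW₀2 : finrank F W₀ = 2 := by
    have := Submodule.finrank_add_eq_of_isCompl hc; rw [hU, hV] at this; omega
  rw [← Nat.card_congr (lineEquiv U W₀ hc hV hU)]
  exact natCard_hom ↥W₀ ↥U hW₀2 hU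

lemma count_pair_reduce (hV : finrank F V = 4) (U W : Submodule F V) (hU : finrank F U = 2)
    (W₀ : Submodule F V) (hc : IsCompl U W₀) :
    Nat.card {X : LGr F V 2 // X.1 ⊓ U = ⊥ ∧ X.1 ⊓ W = ⊥}
      = Nat.card {g : W₀ →ₗ[F] U // LinearMap.ker (projMap U W₀ hc g) ⊓ W = ⊥} := by
  have e1 := Equiv.subtypeSubtypeEquivSubtypeInter
    (fun X : LGr F V 2 => X.1 ⊓ U = ⊥) (fun X : LGr F V 2 => X.1 ⊓ W = ⊥)
  have e2 := (lineEquiv U W₀ hc hV hU).subtypeEquiv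
    (p := fun g => LinearMap.ker (projMap U W₀ hc g) ⊓ W = ⊥)
    (q := fun Y => Y.1.1 ⊓ W = ⊥)
    (fun g => Iff.rfl)
  rw [← Nat.card_congr (e2.trans e1)]

lemma count_skew_pair (hV : finrank F V = 4) (U W : Submodule F V)
    (hU : finrank F U = 2) (hW : finrank F W = 2) (hskew : U ⊓ W = ⊥) :
    Nat.card {X : LGr F V 2 // X.1 ⊓ U = ⊥ ∧ X.1 ⊓ W = ⊥}
      = (Fintype.card F ^ 2 - 1) * (Fintype.card F ^ 2 - Fintype.card F) := by
  have hWU : W ⊓ U = ⊥ := by rw [inf_comm]; exact hskew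
  have hc : IsCompl U W := isCompl_of_skew hV hU hW hWU
  rw [count_pair_reduce hV U W hU W hc]
  have hiff : ∀ g : W →ₗ[F] U,
      (LinearMap.ker (projMap U W hc g) ⊓ W = ⊥) ↔ Function.Injective g := by
    intro g
    constructor
    · intro hbot
      rw [← LinearMap.ker_eq_bot, eq_bot_iff]
      intro w hw
      rw [LinearMap.mem_ker] at hw
      have hfw : projMap U W hc g (w : V) = 0 := by
        rw [projMap_apply_W₀ U W hc g w, hw]
      have hmem : (w : V) ∈ LinearMap.ker (projMap U W hc g) ⊓ W :=
        ⟨LinearMap.mem_ker.2 hfw, w.2⟩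
      rw [hbot, Submodule.mem_bot] at hmem
      rw [Submodule.mem_bot]
      exact Subtype.ext hmem
    · intro hinj
      rw [eq_bot_iff]
      rintro x ⟨hk, hxW⟩
      have h1 : projMap U W hc g x = g ⟨x, hxW⟩ := projMap_apply_W₀ U W hc g ⟨x, hxW⟩
      rw [LinearMap.mem_ker.1 hk] at h1
      have : (⟨x, hxW⟩ : ↥W) = 0 := hinj (by rw [map_zero]; exact h1.symm)
      rw [Submodule.mem_bot]
      exact congrArg Subtype.val this
  rw [Nat.card_congr (Equiv.subtypeEquivRight hiff), count_inj ↥W ↥U hW hU]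
lemma count_meet_pair (hV : finrank F V = 4) (U W : Submodule F V)
    (hU : finrank F U = 2) (hW : finrank F W = 2) (hne : U ≠ W) (hmeet : U ⊓ W ≠ ⊥) :
    Nat.card {X : LGr F V 2 // X.1 ⊓ U = ⊥ ∧ X.1 ⊓ W = ⊥}
      = (Fintype.card F ^ 2 - Fintype.card F) * Fintype.card F ^ 2 := by
  obtain ⟨W₀, hc⟩ := U.exists_isCompl
  have hW₀2 : finrank F W₀ = 2 := by
    have := Submodule.finrank_add_eq_of_isCompl hc; rw [hU, hV] at this; omega
  rw [count_pair_reduce hV U W hU W₀ hc]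
  -- geometry of the pencil
  set ℓ := U ⊓ W with hℓ
  obtain ⟨w₁, hw₁ℓ, hw₁ne⟩ := Submodule.exists_mem_ne_zero_of_ne_bot hmeet
  have hsle : span F {w₁} ≤ ℓ := by
    rw [Submodule.span_le, Set.singleton_subset_iff]; exact hw₁ℓ
  have hℓU : ℓ ≤ U := inf_le_left
  have hℓW : ℓ ≤ W := inf_le_right
  have hℓ2 : finrank F ℓ ≠ 2 := by
    intro h2
    have hUeq : ℓ = U := Submodule.eq_of_le_of_finrank_eq hℓU (by rw [h2, hU])
    have hUW : U ≤ W := by rw [← hUeq]; exact hℓW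
    exact hne (Submodule.eq_of_le_of_finrank_eq hUW (by rw [hU, hW]))
  have hℓ1 : finrank F ℓ = 1 := by
    have hge : 1 ≤ finrank F ℓ := by
      have := Submodule.finrank_mono hsle
      rwa [finrank_span_singleton hw₁ne] at this
    have hle : finrank F ℓ ≤ 2 := by
      have := Submodule.finrank_mono hℓU
      rwa [hU] at this
    omega
  have hspan : span F {w₁} = ℓ :=
    Submodule.eq_of_le_of_finrank_eq hsle (by rw [finrank_span_singleton hw₁ne, hℓ1])
  have hℓltW : ℓ < W := lt_of_le_of_ne hℓW (by intro h; rw [h, hW] at hℓ1; omega)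
  obtain ⟨w₂, hw₂W, hw₂ℓ⟩ := SetLike.exists_of_lt hℓltW
  have hWspan : ℓ ⊔ span F {w₂} = W := by
    apply Submodule.eq_of_le_of_finrank_eq
    · exact sup_le hℓW (by rw [Submodule.span_le, Set.singleton_subset_iff]; exact hw₂W)
    · have hlt : ℓ < ℓ ⊔ span F {w₂} := by
        apply lt_of_le_of_ne le_sup_left
        intro h
        apply hw₂ℓ
        rw [h]
        exact Submodule.mem_sup_right (Submodule.mem_span_singleton_self w₂)
      have h1 : 1 < finrank F ↥(ℓ ⊔ span F {w₂}) := by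
        have := Submodule.finrank_lt_finrank_of_lt hlt
        omega
      have h2 : finrank F ↥(ℓ ⊔ span F {w₂}) ≤ 2 := by
        have := Submodule.finrank_mono
          (sup_le hℓW (by rw [Submodule.span_le, Set.singleton_subset_iff]; exact hw₂W))
        rwa [hW] at this
      rw [hW]; omega
  have hdecomp : ∀ w ∈ W, ∃ a b : F, w = a • w₁ + b • w₂ := by
    intro w hw
    rw [← hWspan] at hw
    obtain ⟨x, hx, y, hy, hxy⟩ := Submodule.mem_sup.1 hw
    rw [← hspan] at hx
    obtain ⟨a, ha⟩ := Submodule.mem_span_singleton.1 hx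
    obtain ⟨b, hb⟩ := Submodule.mem_span_singleton.1 hy
    exact ⟨a, b, by rw [← hxy, ← ha, ← hb]⟩
  set π₀ := W₀.projectionOnto U hc.symm with hπ₀
  set πU := U.projectionOnto W₀ hc with hπU
  set mh : ↥W₀ := π₀ w₂ with hmh
  set s : ↥U := πU w₂ with hs
  have hw₁U : w₁ ∈ U := hℓU hw₁ℓ
  have hw₁W : w₁ ∈ W := hℓW hw₁ℓ
  set u₁ : ↥U := ⟨w₁, hw₁U⟩ with hu₁def
  have hu₁ : u₁ ≠ 0 := fun h => hw₁ne (congrArg Subtype.val h)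
  have hmhne : mh ≠ 0 := by
    intro h0
    have hdec := Submodule.projection_add_projection_eq_self hc w₂
    rw [← Submodule.coe_projectionOnto_apply, ← Submodule.coe_projectionOnto_apply] at hdec
    rw [← hπU, ← hπ₀] at hdec
    rw [← hmh] at hdec
    rw [h0] at hdec
    simp only [ZeroMemClass.coe_zero, add_zero] at hdec
    have : w₂ ∈ U := by rw [← hdec]; exact (πU w₂).2
    exact hw₂ℓ ⟨this, hw₂W⟩
  -- projMap values on w₁ and w₂
  have hfw₁ : ∀ g : W₀ →ₗ[F] U, projMap U W₀ hc g w₁ = u₁ := by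
    intro g
    have : projMap U W₀ hc g (u₁ : V) = u₁ := projMap_apply_U U W₀ hc g u₁
    exact this
  have hfw₂ : ∀ g : W₀ →ₗ[F] U, projMap U W₀ hc g w₂ = g mh + s := by
    intro g
    show g (π₀ w₂) + πU w₂ = g mh + s
    rw [← hmh, ← hs]
  -- the key characterization
  have hiff : ∀ g : W₀ →ₗ[F] U,
      (LinearMap.ker (projMap U W₀ hc g) ⊓ W = ⊥) ↔ g mh + s ∉ span F {u₁} := by
    intro g
    constructor
    · intro hbot hmem
      obtain ⟨c, hcc⟩ := Submodule.mem_span_singleton.1 hmem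
      set w := w₂ - c • w₁ with hwdef
      have hwW : w ∈ W := sub_mem hw₂W (Submodule.smul_mem _ _ hw₁W)
      have hwne : w ≠ 0 := by
        intro h
        rw [hwdef, sub_eq_zero] at h
        apply hw₂ℓ
        rw [← hspan]
        rw [h]
        exact Submodule.smul_mem _ _ (Submodule.mem_span_singleton_self w₁)
      have hfw : projMap U W₀ hc g w = 0 := by
        rw [hwdef, map_sub, _root_.map_smul, hfw₁ g, hfw₂ g, hcc]
        abel
      have : w ∈ LinearMap.ker (projMap U W₀ hc g) ⊓ W := ⟨LinearMap.mem_ker.2 hfw, hwW⟩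
      rw [hbot, Submodule.mem_bot] at this
      exact hwne this
    · intro hnot
      rw [eq_bot_iff]
      rintro x ⟨hk, hxW⟩
      rw [Submodule.mem_bot]
      by_contra hx0
      obtain ⟨a, b, hab⟩ := hdecomp x hxW
      have hfx : a • u₁ + b • (g mh + s) = 0 := by
        have : projMap U W₀ hc g x = 0 := LinearMap.mem_ker.1 hk
        rw [hab, map_add, _root_.map_smul, _root_.map_smul, hfw₁ g, hfw₂ g] at this
        exact this
      by_cases hb : b = 0
      · rw [hb, zero_smul, add_zero] at hfx
        rcases smul_eq_zero.1 hfx with ha | h1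
        · apply hx0; rw [hab, ha, hb, zero_smul, zero_smul, add_zero]
        · exact hu₁ h1
      · apply hnot
        rw [Submodule.mem_span_singleton]
        refine ⟨-(b⁻¹ * a), ?_⟩
        have h3 : b • (g mh + s) = -(a • u₁) := by
          rw [add_comm] at hfx
          exact eq_neg_of_add_eq_zero_left hfx
        have : g mh + s = (-(b⁻¹ * a)) • u₁ := by
          calc g mh + s = b⁻¹ • (b • (g mh + s)) := by
                rw [smul_smul, inv_mul_cancel₀ hb, one_smul]
            _ = b⁻¹ • -(a • u₁) := by rw [h3]
            _ = (-(b⁻¹ * a)) • u₁ := by rw [smul_neg, smul_smul, neg_smul]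
        exact this.symm
  rw [Nat.card_congr (Equiv.subtypeEquivRight hiff)]
  -- now count the maps g with g mh + s ∉ span {u₁}
  have hspanmh : (span F {mh} : Submodule F ↥W₀) ≠ (⊤ : Submodule F ↥W₀) := by
    intro h
    have h5 := finrank_span_singleton (K := F) hmhne
    rw [h] at h5
    rw [finrank_top F ↥W₀] at h5
    rw [hW₀2] at h5
    omega
  obtain ⟨e₂, _, he₂⟩ := SetLike.exists_of_lt
    (lt_of_le_of_ne (le_top : (span F {mh} : Submodule F ↥W₀) ≤ ⊤) hspanmh)
  have he₂ne : e₂ ≠ 0 := fun h => he₂ (h ▸ Submodule.zero_mem _)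
  have hli : LinearIndependent F ![mh, e₂] := by
    rw [linearIndependent_fin2]
    constructor
    · simpa using he₂ne
    · intro a hae
      simp only [Matrix.cons_val_one, Matrix.head_cons, Matrix.cons_val_zero] at hae
      by_cases ha : a = 0
      · rw [ha, zero_smul] at hae; exact hmhne hae.symm
      · apply he₂
        rw [Submodule.mem_span_singleton]
        refine ⟨a⁻¹, ?_⟩
        rw [← hae, smul_smul, inv_mul_cancel₀ ha, one_smul]
  have hcard2 : Fintype.card (Fin 2) = finrank F ↥W₀ := by rw [Fintype.card_fin, hW₀2]
  set b := basisOfLinearIndependentOfCardEqFinrank hli hcard2 with hbdef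
  have hb0 : b 0 = mh := by
    rw [hbdef, coe_basisOfLinearIndependentOfCardEqFinrank]
    rfl
  have hb1 : b 1 = e₂ := by
    rw [hbdef, coe_basisOfLinearIndependentOfCardEqFinrank]
    rfl
  set E : (W₀ →ₗ[F] U) ≃ (↥U × ↥U) :=
    (b.constr F).toEquiv.symm.trans (piFinTwoEquiv (fun _ => ↥U)) with hE
  have hEapp : ∀ g : W₀ →ₗ[F] U, E g = (g mh, g e₂) := by
    intro g
    show (piFinTwoEquiv (fun _ => ↥U)) ((b.constr F).toEquiv.symm g) = _
    have h0 : ((b.constr F).toEquiv.symm g) = fun i => g (b i) := by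
      funext i
      exact constr_symm_apply b g i
    rw [h0]
    show (g (b 0), g (b 1)) = (g mh, g e₂)
    rw [hb0, hb1]
  have e3 := Equiv.subtypeEquiv E
    (p := fun g : W₀ →ₗ[F] U => g mh + s ∉ span F {u₁})
    (q := fun x : ↥U × ↥U => x.1 + s ∉ span F {u₁})
    (fun g => by rw [hEapp g])
  rw [Nat.card_congr e3]
  have e4 : {x : ↥U × ↥U // x.1 + s ∉ span F {u₁}}
      ≃ {y : ↥U // y + s ∉ span F {u₁}} × ↥U :=
    { toFun := fun x => (⟨x.1.1, x.2⟩, x.1.2)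
      invFun := fun y => ⟨(y.1.1, y.2), y.1.2⟩
      left_inv := fun x => rfl
      right_inv := fun y => rfl }
  rw [Nat.card_congr e4, Nat.card_prod, card_shift_span ↥U hU s u₁ hu₁,
    natCard_module (F := F) ↥U, hU]
end Counts

set_option maxHeartbeats 2000000 in
/-- **Theorem A(2).** The multiplicity of `p^i` as a `p`-adic elementary divisor of the
skew-lines incidence matrix `A` of `PG(3,q)`, `q = p^t`, vanishes for `t < i < 2t`,
for `3t < i < 4t`, and for `i > 4t`. -/
theorem elemDiv_vanish (p t : ℕ) [Fact p.Prime] (ht : 1 ≤ t)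
    (F : Type*) [Field F] [Fintype F] (hF : Fintype.card F = p ^ t)
    (V : Type*) [AddCommGroup V] [Module F V] (hV : Module.finrank F V = 4)
    [DecidableEq (Submodule F V)] [Fintype (LGr F V 2)]
    (A : Matrix (LGr F V 2) (LGr F V 2) ℤ_[p])
    (hA : ∀ U W : LGr F V 2, A U W = if U.1 ⊓ W.1 = ⊥ then 1 else 0)
    (P Q : Matrix (LGr F V 2) (LGr F V 2) ℤ_[p]) (d : LGr F V 2 → ℤ_[p])
    (hP : IsUnit P.det) (hQ : IsUnit Q.det) (hPQ : P * A * Q = Matrix.diagonal d)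
    (i : ℕ) (hi : (t < i ∧ i < 2 * t) ∨ (3 * t < i ∧ i < 4 * t) ∨ 4 * t < i) :
    Nat.card {j : LGr F V 2 // Associated ((p : ℤ_[p]) ^ i) (d j)} = 0 := by
  have hFD : FiniteDimensional F V := FiniteDimensional.of_finrank_pos (by rw [hV]; norm_num)
  set q : ℤ_[p] := (Fintype.card F : ℤ_[p]) with hqdef
  have hqp : q = (p:ℤ_[p])^t := by rw [hqdef, hF]; push_cast; ring
  have hqpow : ∀ k : ℕ, q^k = (p:ℤ_[p])^(k*t) := by
    intro k; rw [hqp, ← pow_mul, mul_comm]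
  have hcF : 2 ≤ Fintype.card F := Fintype.one_lt_card
  have hc1 : 1 ≤ Fintype.card F ^ 2 := by nlinarith
  have hc2 : Fintype.card F ≤ Fintype.card F ^ 2 := by nlinarith
  set J : Matrix (LGr F V 2) (LGr F V 2) ℤ_[p] := Matrix.of (fun _ _ => 1) with hJdef
  -- entry computations
  have hAJ_entry : ∀ U W : LGr F V 2,
      (A * J) U W = ((Nat.card {X : LGr F V 2 // X.1 ⊓ U.1 = ⊥} : ℕ) : ℤ_[p]) := by
    intro U W
    rw [Matrix.mul_apply]
    have hterm : ∀ X : LGr F V 2, A U X * J X W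
        = if X.1 ⊓ U.1 = ⊥ then (1:ℤ_[p]) else 0 := by
      intro X
      rw [hA U X]
      show (if U.1 ⊓ X.1 = ⊥ then (1:ℤ_[p]) else 0) * 1 = _
      rw [mul_one, inf_comm]
    rw [Finset.sum_congr rfl (fun X _ => hterm X), Finset.sum_boole,
      Nat.card_eq_fintype_card, Fintype.card_subtype]
  have hJA_entry : ∀ U W : LGr F V 2,
      (J * A) U W = ((Nat.card {X : LGr F V 2 // X.1 ⊓ W.1 = ⊥} : ℕ) : ℤ_[p]) := by
    intro U W
    rw [Matrix.mul_apply]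
    have hterm : ∀ X : LGr F V 2, J U X * A X W
        = if X.1 ⊓ W.1 = ⊥ then (1:ℤ_[p]) else 0 := by
      intro X
      rw [hA X W]
      show 1 * (if X.1 ⊓ W.1 = ⊥ then (1:ℤ_[p]) else 0) = _
      rw [one_mul]
    rw [Finset.sum_congr rfl (fun X _ => hterm X), Finset.sum_boole,
      Nat.card_eq_fintype_card, Fintype.card_subtype]
  have hAA_entry : ∀ U W : LGr F V 2,
      (A * A) U W
        = ((Nat.card {X : LGr F V 2 // X.1 ⊓ U.1 = ⊥ ∧ X.1 ⊓ W.1 = ⊥} : ℕ) : ℤ_[p]) := by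
    intro U W
    rw [Matrix.mul_apply]
    have hterm : ∀ X : LGr F V 2, A U X * A X W
        = if (X.1 ⊓ U.1 = ⊥ ∧ X.1 ⊓ W.1 = ⊥) then (1:ℤ_[p]) else 0 := by
      intro X
      rw [hA U X, hA X W, inf_comm U.1 X.1]
      by_cases h1 : X.1 ⊓ U.1 = ⊥ <;> by_cases h2 : X.1 ⊓ W.1 = ⊥ <;> simp [h1, h2]
    rw [Finset.sum_congr rfl (fun X _ => hterm X), Finset.sum_boole,
      Nat.card_eq_fintype_card, Fintype.card_subtype]
  -- the three matrix identities
  have hAJ : A * J = q^4 • J := by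
    ext U W
    rw [hAJ_entry U W, count_single hV U.1 U.2]
    show _ = q^4 * J U W
    show _ = q^4 * 1
    rw [mul_one, hqdef]
    push_cast
    ring
  have hJA : J * A = q^4 • J := by
    ext U W
    rw [hJA_entry U W, count_single hV W.1 W.2]
    show _ = q^4 * J U W
    show _ = q^4 * 1
    rw [mul_one, hqdef]
    push_cast
    ring
  have hbotne : ∀ U : LGr F V 2, U.1 ≠ ⊥ := by
    intro U h
    have := U.2
    rw [h, finrank_bot] at this
    omega
  have hquad : A * A = q^3 • (1 : Matrix (LGr F V 2) (LGr F V 2) ℤ_[p])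
      + (q - q^2) • A + (q^4 - q^3) • J := by
    ext U W
    rw [hAA_entry U W]
    show _ = q^3 * (1 : Matrix (LGr F V 2) (LGr F V 2) ℤ_[p]) U W + (q - q^2) * A U W
      + (q^4 - q^3) * J U W
    rw [hA U W]
    show _ = q^3 * (1 : Matrix (LGr F V 2) (LGr F V 2) ℤ_[p]) U W
      + (q - q^2) * (if U.1 ⊓ W.1 = ⊥ then 1 else 0) + (q^4 - q^3) * 1
    by_cases hUW : U = W
    · subst hUW
      have hiff : ∀ X : LGr F V 2, (X.1 ⊓ U.1 = ⊥ ∧ X.1 ⊓ U.1 = ⊥) ↔ (X.1 ⊓ U.1 = ⊥) :=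
        fun X => and_self_iff
      rw [Nat.card_congr (Equiv.subtypeEquivRight hiff), count_single hV U.1 U.2,
        Matrix.one_apply_eq, if_neg (by rw [inf_idem]; exact hbotne U)]
      rw [hqdef]
      push_cast
      ring
    · rw [Matrix.one_apply_ne hUW]
      by_cases hsk : U.1 ⊓ W.1 = ⊥
      · rw [count_skew_pair hV U.1 W.1 U.2 W.2 hsk, if_pos hsk]
        rw [hqdef]
        push_cast [Nat.cast_sub hc1, Nat.cast_sub hc2]
        ring
      · rw [count_meet_pair hV U.1 W.1 U.2 W.2 (fun h => hUW (Subtype.ext h)) hsk,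
          if_neg hsk]
        rw [hqdef]
        push_cast [Nat.cast_sub hc2]
        ring
  -- the inverse-like matrix C
  set C : Matrix (LGr F V 2) (LGr F V 2) ℤ_[p]
    := q • A + (q^3 - q^2) • (1 : Matrix (LGr F V 2) (LGr F V 2) ℤ_[p]) - (q - 1) • J
    with hCdef
  have hAC : A * C = q^4 • (1 : Matrix (LGr F V 2) (LGr F V 2) ℤ_[p]) := by
    rw [hCdef, Matrix.mul_sub, Matrix.mul_add, Matrix.mul_smul, Matrix.mul_smul,
      Matrix.mul_smul, Matrix.mul_one, hquad, hAJ]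
    module
  have hCA : C * A = q^4 • (1 : Matrix (LGr F V 2) (LGr F V 2) ℤ_[p]) := by
    rw [hCdef, Matrix.sub_mul, Matrix.add_mul, Matrix.smul_mul, Matrix.smul_mul,
      Matrix.smul_mul, Matrix.one_mul, hquad, hJA]
    module
  have hcubicA : A*A*A + (q^2 - q - q^4) • (A*A) + (q^5 - q^3 - q^6) • A
      + (q^7) • (1 : Matrix (LGr F V 2) (LGr F V 2) ℤ_[p]) = 0 := by
    have h1 := congrArg (fun M => M * A) hquad
    simp only [Matrix.add_mul, Matrix.smul_mul, Matrix.one_mul] at h1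
    rw [hJA] at h1
    rw [h1, hquad]
    module
  -- cubic for C
  have hstep1 : q^4 • (A*A) + ((q^2 - q - q^4)*q^4) • A + ((q^5 - q^3 - q^6)*q^4) •
      (1 : Matrix (LGr F V 2) (LGr F V 2) ℤ_[p]) + q^7 • C = 0 := by
    have h1 := congrArg (fun M => M * C) hcubicA
    simp only [Matrix.add_mul, Matrix.smul_mul, Matrix.zero_mul] at h1
    rw [Matrix.mul_assoc (A*A) A C, Matrix.mul_assoc A A C] at h1
    simp only [hAC, Matrix.mul_smul, Matrix.mul_one, Matrix.one_mul] at h1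
    rw [← h1]
    module
  have hstep2 : q^8 • A + ((q^2 - q - q^4)*q^8) •
      (1 : Matrix (LGr F V 2) (LGr F V 2) ℤ_[p]) + ((q^5 - q^3 - q^6)*q^4) • C
      + q^7 • (C * C) = 0 := by
    have h1 := congrArg (fun M => M * C) hstep1
    simp only [Matrix.add_mul, Matrix.smul_mul, Matrix.zero_mul] at h1
    rw [Matrix.mul_assoc A A C] at h1
    simp only [hAC, Matrix.mul_smul, Matrix.mul_one, Matrix.one_mul] at h1
    rw [← h1]
    module
  have hstep3 : q^12 • (1 : Matrix (LGr F V 2) (LGr F V 2) ℤ_[p])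
      + ((q^2 - q - q^4)*q^8) • C + ((q^5 - q^3 - q^6)*q^4) • (C * C)
      + q^7 • (C * C * C) = 0 := by
    have h1 := congrArg (fun M => M * C) hstep2
    simp only [Matrix.add_mul, Matrix.smul_mul, Matrix.zero_mul] at h1
    simp only [hAC, Matrix.mul_smul, Matrix.mul_one, Matrix.one_mul] at h1
    rw [← h1]
    module
  have hqne : q ≠ 0 := by
    rw [hqp]
    exact PadicInt.p_pow_ne_zero t
  have hq7ne : (q^7 : ℤ_[p]) ≠ 0 := pow_ne_zero _ hqne
  have hcubicC : C*C*C + (q^2 - q^3 - 1) • (C*C) + (q^3 - q^2 - q^5) • C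
      + (q^5) • (1 : Matrix (LGr F V 2) (LGr F V 2) ℤ_[p]) = 0 := by
    have h4 : (q^7 : ℤ_[p]) • (C*C*C + (q^2 - q^3 - 1) • (C*C) + (q^3 - q^2 - q^5) • C
        + (q^5) • (1 : Matrix (LGr F V 2) (LGr F V 2) ℤ_[p])) = 0 := by
      rw [← hstep3]
      module
    ext j k
    have := congrArg (fun M => M j k) h4
    simp only [Matrix.smul_apply, Matrix.zero_apply, smul_eq_mul] at this
    rcases mul_eq_zero.1 this with h | h
    · exact absurd h hq7ne
    · rw [Matrix.zero_apply]
      exact h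
  -- transfer to the diagonal side
  letI := P.invertibleOfIsUnitDet hP
  letI := Q.invertibleOfIsUnitDet hQ
  set M : Matrix (LGr F V 2) (LGr F V 2) ℤ_[p] := ⅟Q * C * ⅟P with hMdef
  have hDM : Matrix.diagonal d * M = q^4 • (1 : Matrix (LGr F V 2) (LGr F V 2) ℤ_[p]) := by
    rw [← hPQ, hMdef]
    calc P * A * Q * (⅟Q * C * ⅟P) = P * (A * C) * ⅟P := by
          simp only [Matrix.mul_assoc, invOf_mul_cancel_left, mul_invOf_cancel_left]
      _ = q^4 • (P * ⅟P) := by rw [hAC]; simp only [Matrix.mul_smul, Matrix.smul_mul,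
          Matrix.mul_one]
      _ = q^4 • (1 : Matrix (LGr F V 2) (LGr F V 2) ℤ_[p]) := by rw [mul_invOf_self]
  have hdMjj : ∀ j : LGr F V 2, d j * M j j = q^4 := by
    intro j
    have := congrArg (fun N => N j j) hDM
    simp only [Matrix.smul_apply, smul_eq_mul] at this
    rw [Matrix.diagonal_mul] at this
    rw [this, Matrix.one_apply_eq, mul_one]
  have hq4t : (q^4 : ℤ_[p]) = (p:ℤ_[p])^(4*t) := hqpow 4
  -- now the emptiness argument
  suffices hEmpty : IsEmpty {j : LGr F V 2 // Associated ((p : ℤ_[p]) ^ i) (d j)} by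
    exact Nat.card_of_isEmpty
  constructor
  rintro ⟨j, hj⟩
  obtain ⟨v, hv⟩ := hj
  rcases hi with ⟨h1, h2⟩ | ⟨h1, h2⟩ | h1
  · -- t < i < 2t : use the dual matrix
    have hdj0 : ∀ k, d k ≠ 0 := by
      intro k hk
      have := hdMjj k
      rw [hk, zero_mul] at this
      exact (pow_ne_zero 4 hqne) this.symm
    have hoff : ∀ j' k, j' ≠ k → M j' k = 0 := by
      intro j' k hne
      have := congrArg (fun N => N j' k) hDM
      simp only [Matrix.smul_apply, smul_eq_mul] at this
      rw [Matrix.diagonal_mul, Matrix.one_apply_ne hne, mul_zero] at this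
      rcases mul_eq_zero.1 this with h | h
      · exact absurd h (hdj0 j')
      · exact h
    set d' : LGr F V 2 → ℤ_[p] := fun k => M k k with hd'def
    have hMdiag : ⅟Q * C * ⅟P = Matrix.diagonal d' := by
      rw [← hMdef]
      ext j' k
      by_cases h : j' = k
      · subst h; rw [Matrix.diagonal_apply_eq]
      · rw [Matrix.diagonal_apply_ne _ h]; exact hoff j' k h
    haveI : Invertible (⅟Q) := invertibleInvOf
    haveI : Invertible (⅟P) := invertibleInvOf
    have hassoc : Associated ((p:ℤ_[p])^(4*t - i)) (d' j) := by
      refine ⟨v⁻¹, ?_⟩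
      have h3 : (p:ℤ_[p])^i * (↑v * d' j) = (p:ℤ_[p])^i * ((p:ℤ_[p])^(4*t-i) * ↑v⁻¹ * ↑v) := by
        rw [← mul_assoc, hv, hdMjj j, hq4t]
        rw [mul_assoc, Units.inv_mul, mul_one, ← pow_add]
        congr 1
        omega
      have h4 := mul_left_cancel₀ (PadicInt.p_pow_ne_zero i) h3
      rw [mul_assoc, Units.inv_mul, mul_one] at h4
      have h6 : (↑(v⁻¹) : ℤ_[p]) * (↑v * d' j) = ↑(v⁻¹) * (p:ℤ_[p])^(4*t-i) := by rw [h4]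
      rw [← mul_assoc, Units.inv_mul, one_mul] at h6
      rw [mul_comm]
      exact h6.symm
    exact gap_lemma C (⅟Q) (⅟P) d' ((⅟Q).isUnit_det_of_invertible)
      ((⅟P).isUnit_det_of_invertible) hMdiag _ _ _ hcubicC (2*t) (4*t - i)
      ⟨(p:ℤ_[p])^t - 1 - (p:ℤ_[p])^(3*t), by
        constructor
        · apply PadicInt.isUnit_of_not_dvd
          intro hdvd
          have hd1 : (p:ℤ_[p]) ∣ 1 := by
            have h5 : (1:ℤ_[p]) = (p:ℤ_[p])^t - (p:ℤ_[p])^(3*t)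
                - ((p:ℤ_[p])^t - 1 - (p:ℤ_[p])^(3*t)) := by ring
            rw [h5]
            refine dvd_sub (dvd_sub ?_ ?_) hdvd
            · exact dvd_pow_self _ (by omega)
            · exact dvd_pow_self _ (by omega)
          exact PadicInt.not_isUnit_p (isUnit_of_dvd_one hd1)
        · rw [hqpow 3, hqpow 2, hqpow 5, mul_sub, mul_sub, mul_one, ← pow_add, ← pow_add,
            show 2*t+t = 3*t from by ring, show 2*t+3*t = 5*t from by ring]⟩
      (by
        rw [hqpow 5]
        apply pow_dvd_pow
        omega)
      (by omega) j hassoc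
  · -- 3t < i < 4t : direct gap on A
    exact gap_lemma A P Q d hP hQ hPQ _ _ _ hcubicA (3*t) i
      ⟨(p:ℤ_[p])^(2*t) - 1 - (p:ℤ_[p])^(3*t), by
        constructor
        · apply PadicInt.isUnit_of_not_dvd
          intro hdvd
          have hd1 : (p:ℤ_[p]) ∣ 1 := by
            have h5 : (1:ℤ_[p]) = (p:ℤ_[p])^(2*t) - (p:ℤ_[p])^(3*t)
                - ((p:ℤ_[p])^(2*t) - 1 - (p:ℤ_[p])^(3*t)) := by ring
            rw [h5]
            refine dvd_sub (dvd_sub ?_ ?_) hdvd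
            · exact dvd_pow_self _ (by omega)
            · exact dvd_pow_self _ (by omega)
          exact PadicInt.not_isUnit_p (isUnit_of_dvd_one hd1)
        · rw [hqpow 5, hqpow 3, hqpow 6, mul_sub, mul_sub, mul_one, ← pow_add, ← pow_add,
            show 3*t+2*t = 5*t from by ring, show 3*t+3*t = 6*t from by ring]⟩
      (by
        rw [hqpow 7]
        apply pow_dvd_pow
        omega)
      (by omega) j ⟨v, hv⟩
  · -- i > 4t
    have hdvd1 : (p:ℤ_[p])^(4*t+1) ∣ d j := by
      calc (p:ℤ_[p])^(4*t+1) ∣ (p:ℤ_[p])^i := pow_dvd_pow _ (by omega)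
        _ ∣ d j := ⟨↑v, hv.symm⟩
    have hdvd2 : d j ∣ (p:ℤ_[p])^(4*t) := by
      refine ⟨M j j, ?_⟩
      rw [← hq4t, ← hdMjj j]
    have : (p:ℤ_[p])^(4*t+1) ∣ (p:ℤ_[p])^(4*t) * 1 := by
      rw [mul_one]
      exact hdvd1.trans hdvd2
    exact pow_succ_not_dvd_pow_mul_unit isUnit_one (4*t) this
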